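/- Let α ≥ 0 with 2α ≤ 1 and define g(y) = e^{y(1+αy)} - 1 - y(1+2αy). Then g(y) > 0 for all y > 0. -/
import Mathlib


theorem g_pos (α : ℝ) (hα : 0 ≤ α) (hα2 : 2 * α ≤ 1) :
    ∀ y : ℝ, 0 < y →
      0 < Real.exp (y * (1 + α * y)) - 1 - y * (1 + 2 * α * y) := by
  intro y hy
  have hu : 0 ≤ y * (1 + α * y) := by positivity
  have hexp := Real.sum_le_exp_of_nonneg hu 3
  simp [Finset.sum_range_succ] at hexp
  rcases eq_or_lt_of_le hα with h0 | h0
  · nlinarith [sq_nonneg y, mul_pos hy hy]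
  · nlinarith [mul_pos hy hy, mul_pos (mul_pos h0 hy) hy,
      sq_nonneg (y * (1 + α * y)), mul_pos (mul_pos h0 (mul_pos hy hy)) (mul_pos hy hy)]
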